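/- Let G be a graph containing two vertex-disjoint odd cycles C_1, C_2 with lengths congruent modulo 4, and three pairwise vertex-disjoint paths P, Q, R each joining a vertex of C_1 to a vertex of C_2 with no interior vertex on C_1 ∪ C_2. Then the subgraph C_1 ∪ C_2 ∪ P ∪ Q ∪ R contains a cycle of length divisible by 4. -/

import Mathlib

namespace StmtThirteenAux

open SimpleGraph

variable {V : Type*} {G : SimpleGraph V}

lemma arith4 (l1 l2 b A A' B B' : ℕ) (hA : A + A' = l1) (hB : B + B' = l2)
    (hl : l1 % 2 = 1) (hb : (b + l1) % 2 = 1) (hmod : l1 % 4 = l2 % 4) :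
    4 ∣ b + A + B ∨ 4 ∣ b + A + B' ∨ 4 ∣ b + A' + B ∨ 4 ∣ b + A' + B' := by
  have hl2 : l2 % 2 = 1 := by omega
  have h3 : (2 * b + l1 + l2) % 4 = 2 := by omega
  have key : ∀ s t : ℕ, s + t = 2 * b + l1 + l2 → s % 2 = 0 → 4 ∣ s ∨ 4 ∣ t := by
    intro s t h h'; omega
  rcases Nat.even_or_odd (b + A + B) with he | ho
  · rw [Nat.even_iff] at he
    have := key (b + A + B) (b + A' + B') (by omega) (by omega)
    tauto
  · rw [Nat.odd_iff] at ho
    have := key (b + A + B') (b + A' + B) (by omega) (by omega)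
    tauto

lemma mem_support_tail_of_closed {v : V} {p : G.Walk v v} (hp : ¬ p.Nil) {x : V}
    (hx : x ∈ p.support) : x ∈ p.support.tail := by
  cases p with
  | nil => exact absurd Walk.Nil.nil hp
  | cons h q =>
    rw [Walk.support_cons, List.tail_cons]
    rcases (Walk.mem_support_iff _).mp hx with rfl | hx'
    · exact Walk.end_mem_support q
    · rw [Walk.support_cons, List.tail_cons] at hx'
      exact hx'

lemma mem_support_rotate [DecidableEq V] {v a : V} {c : G.Walk v v} (hc : ¬ c.Nil)
    (ha : a ∈ c.support) {x : V} (hx : x ∈ c.support) : x ∈ (c.rotate a ha).support := by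
  have h1 : x ∈ c.support.tail := mem_support_tail_of_closed hc hx
  exact List.mem_of_mem_tail ((Walk.support_rotate c a ha).mem_iff.mpr h1)

lemma mem_support_of_rotate [DecidableEq V] {v a : V} {c : G.Walk v v} (hc : ¬ c.Nil)
    (ha : a ∈ c.support) {x : V} (hx : x ∈ (c.rotate a ha).support) : x ∈ c.support := by
  have hc' : ¬ (c.rotate a ha).Nil := by
    rw [Walk.nil_iff_length_eq] at hc ⊢
    rwa [Walk.rotate, Walk.length_append, Nat.add_comm, ← Walk.length_append,
      Walk.take_spec]
  have h1 : x ∈ (c.rotate a ha).support.tail := mem_support_tail_of_closed hc' hx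
  exact List.mem_of_mem_tail ((Walk.support_rotate c a ha).mem_iff.mp h1)

lemma length_rotate [DecidableEq V] {v a : V} (c : G.Walk v v) (ha : a ∈ c.support) :
    (c.rotate a ha).length = c.length := by
  rw [Walk.rotate, Walk.length_append, Nat.add_comm, ← Walk.length_append, Walk.take_spec]

lemma cycle_split [DecidableEq V] {v a b : V} {c : G.Walk v v} (hc : c.IsCycle)
    (ha : a ∈ c.support) (hb : b ∈ c.support) (hab : a ≠ b) :
    ∃ (α β : G.Walk a b), α.IsPath ∧ β.IsPath ∧ α.length + β.length = c.length ∧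
      (∀ x ∈ α.support, x ∈ c.support) ∧ (∀ x ∈ β.support, x ∈ c.support) ∧
      (∀ e ∈ α.edges, e ∈ c.edges) ∧ (∀ e ∈ β.edges, e ∈ c.edges) := by
  have hnil : ¬ c.Nil := by
    rw [Walk.nil_iff_length_eq]
    have := hc.three_le_length
    omega
  have hcyc' : (c.rotate a ha).IsCycle := hc.rotate ha
  have hb' : b ∈ (c.rotate a ha).support := mem_support_rotate hnil ha hb
  set c' := c.rotate a ha with hc'def
  set α := c'.takeUntil b hb' with hαdef
  set δ := c'.dropUntil b hb' with hδdef
  have hspec : α.append δ = c' := Walk.take_spec c' hb'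
  have htail : c'.support.tail = α.support.tail ++ δ.support.tail := by
    have h1 : c'.support = α.support ++ δ.support.tail := by
      rw [← hspec, Walk.support_append]
    rw [h1]; exact List.tail_append_of_ne_nil (Walk.support_ne_nil α)
  have hnd := hcyc'.support_nodup
  rw [htail, List.nodup_append] at hnd
  obtain ⟨hnd1, hnd2, hdisj'⟩ := hnd
  have haδ : a ∈ δ.support.tail := Walk.end_mem_tail_support_of_ne (Ne.symm hab) δ
  have hαpath : α.IsPath := by
    constructor
    · exact hcyc'.isTrail.takeUntil hb'
    · rw [Walk.support_eq_cons α]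
      exact List.nodup_cons.mpr ⟨fun h => hdisj' _ h _ haδ rfl, hnd1⟩
  have hbα : b ∈ α.support.tail := by
    rcases (Walk.mem_support_iff α).mp (Walk.end_mem_support α) with h | h
    · exact absurd h.symm hab
    · exact h
  have hδpath : δ.IsPath := by
    constructor
    · exact hcyc'.isTrail.dropUntil hb'
    · rw [Walk.support_eq_cons δ]
      exact List.nodup_cons.mpr ⟨fun h => hdisj' _ hbα _ h rfl, hnd2⟩
  refine ⟨α, δ.reverse, hαpath, hδpath.reverse, ?_, ?_, ?_, ?_, ?_⟩
  · rw [Walk.length_reverse]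
    have := congrArg Walk.length hspec
    rw [Walk.length_append] at this
    rw [this, hc'def, length_rotate]
  · intro x hx
    exact mem_support_of_rotate hnil ha (Walk.support_takeUntil_subset c' hb' hx)
  · intro x hx
    rw [Walk.support_reverse, List.mem_reverse] at hx
    exact mem_support_of_rotate hnil ha (Walk.support_dropUntil_subset c' hb' hx)
  · intro e he
    exact (Walk.rotate_edges c a ha).mem_iff.mp (Walk.edges_takeUntil_subset c' hb' he)
  · intro e he
    rw [Walk.edges_reverse, List.mem_reverse] at he
    exact (Walk.rotate_edges c a ha).mem_iff.mp (Walk.edges_dropUntil_subset c' hb' he)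

lemma isPath_append' {u v w : V} {p : G.Walk u v} {q : G.Walk v w} (hp : p.IsPath)
    (hq : q.IsPath) (hmeet : ∀ x, x ∈ p.support → x ∈ q.support → x = v) :
    (p.append q).IsPath := by
  rw [Walk.isPath_def, Walk.support_append]
  have hqnd := hq.support_nodup
  rw [Walk.support_eq_cons q] at hqnd
  obtain ⟨hvq, hqtl⟩ := List.nodup_cons.mp hqnd
  refine List.Nodup.append hp.support_nodup hqtl ?_
  intro x hx hx'
  have hxq : x ∈ q.support := List.mem_of_mem_tail hx'
  have := hmeet x hx hxq
  subst this
  exact hvq hx'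

lemma cycle_of_two_paths {u v : V} {p q : G.Walk u v} (hp : p.IsPath) (hq : q.IsPath)
    (hne : u ≠ v)
    (hmeet : ∀ x, x ∈ p.support → x ∈ q.support → x = u ∨ x = v)
    (hedge : ∀ e, e ∈ p.edges → e ∉ q.edges) :
    (p.append q.reverse).IsCycle := by
  have hpnd := hp.support_nodup
  rw [Walk.support_eq_cons p] at hpnd
  obtain ⟨hup, hptl⟩ := List.nodup_cons.mp hpnd
  have hq' : q.reverse.IsPath := hq.reverse
  have hqnd := hq'.support_nodup
  rw [Walk.support_eq_cons q.reverse] at hqnd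
  obtain ⟨hvq, hqtl⟩ := List.nodup_cons.mp hqnd
  refine ⟨⟨⟨?_⟩, ?_⟩, ?_⟩
  · rw [Walk.edges_append, Walk.edges_reverse]
    refine List.Nodup.append hp.isTrail.edges_nodup
      (List.nodup_reverse.mpr hq.isTrail.edges_nodup) ?_
    intro e he he'
    exact hedge e he (List.mem_reverse.mp he')
  · intro h
    apply hne
    have hlen : (p.append q.reverse).length = 0 := by rw [h]; rfl
    rw [Walk.length_append] at hlen
    have hp0 : p.length = 0 := by omega
    exact Walk.eq_of_length_eq_zero hp0
  · rw [Walk.tail_support_append]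
    refine List.Nodup.append hptl hqtl ?_
    intro x hx hx'
    have hxp : x ∈ p.support := List.mem_of_mem_tail hx
    have hxq : x ∈ q.support := by
      have := List.mem_of_mem_tail hx'
      rwa [Walk.support_reverse, List.mem_reverse] at this
    rcases hmeet x hxp hxq with rfl | rfl
    · exact hup hx
    · exact hvq hx'

lemma pair_cycles [DecidableEq V] {v₁ v₂ u₁ u₂ w₁ w₂ : V}
    {C₁ : G.Walk v₁ v₁} {C₂ : G.Walk v₂ v₂} (hC₁ : C₁.IsCycle) (hC₂ : C₂.IsCycle)
    (hdisj : ∀ u, u ∈ C₁.support → u ∉ C₂.support)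
    {S : G.Walk u₁ u₂} {T : G.Walk w₁ w₂} (hS : S.IsPath) (hT : T.IsPath)
    (hu₁ : u₁ ∈ C₁.support) (hu₂ : u₂ ∈ C₂.support)
    (hw₁ : w₁ ∈ C₁.support) (hw₂ : w₂ ∈ C₂.support)
    (hSint : ∀ x ∈ S.support, x ≠ u₁ → x ≠ u₂ → x ∉ C₁.support ∧ x ∉ C₂.support)
    (hTint : ∀ x ∈ T.support, x ≠ w₁ → x ≠ w₂ → x ∉ C₁.support ∧ x ∉ C₂.support)
    (hST : ∀ x, x ∈ S.support → x ∉ T.support) :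
    ∃ A A' B B' : ℕ, A + A' = C₁.length ∧ B + B' = C₂.length ∧
      ∀ X Y : ℕ, (X = A ∨ X = A') → (Y = B ∨ Y = B') →
        ∃ (w : V) (c : G.Walk w w), c.IsCycle ∧
          c.length = S.length + T.length + X + Y ∧
          ∀ e ∈ c.edges, e ∈ C₁.edges ∨ e ∈ C₂.edges ∨ e ∈ S.edges ∨ e ∈ T.edges := by
  have hu₁w₁ : u₁ ≠ w₁ := fun h =>
    hST u₁ (Walk.start_mem_support S) (h ▸ Walk.start_mem_support T)
  have hu₂w₂ : u₂ ≠ w₂ := fun h =>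
    hST u₂ (Walk.end_mem_support S) (h ▸ Walk.end_mem_support T)
  have hSsup1 : ∀ x ∈ S.support, x ∈ C₁.support → x = u₁ := by
    intro x hx hx1
    by_contra h
    rcases eq_or_ne x u₂ with rfl | h2
    · exact hdisj _ hx1 hu₂
    · exact (hSint x hx h h2).1 hx1
  have hSsup2 : ∀ x ∈ S.support, x ∈ C₂.support → x = u₂ := by
    intro x hx hx2
    by_contra h
    rcases eq_or_ne x u₁ with rfl | h1
    · exact hdisj _ hu₁ hx2
    · exact (hSint x hx h1 h).2 hx2
  have hTsup1 : ∀ x ∈ T.support, x ∈ C₁.support → x = w₁ := by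
    intro x hx hx1
    by_contra h
    rcases eq_or_ne x w₂ with rfl | h2
    · exact hdisj _ hx1 hw₂
    · exact (hTint x hx h h2).1 hx1
  have hTsup2 : ∀ x ∈ T.support, x ∈ C₂.support → x = w₂ := by
    intro x hx hx2
    by_contra h
    rcases eq_or_ne x w₁ with rfl | h1
    · exact hdisj _ hw₁ hx2
    · exact (hTint x hx h1 h).2 hx2
  obtain ⟨α₁, α₂, hα₁p, hα₂p, hlen₁, hα₁s, hα₂s, hα₁e, hα₂e⟩ :=
    cycle_split hC₁ hu₁ hw₁ hu₁w₁
  obtain ⟨β₁, β₂, hβ₁p, hβ₂p, hlen₂, hβ₁s, hβ₂s, hβ₁e, hβ₂e⟩ :=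
    cycle_split hC₂ hu₂ hw₂ hu₂w₂
  have key : ∀ (α : G.Walk u₁ w₁) (β : G.Walk u₂ w₂), α.IsPath → β.IsPath →
      (∀ x ∈ α.support, x ∈ C₁.support) → (∀ x ∈ β.support, x ∈ C₂.support) →
      (∀ e ∈ α.edges, e ∈ C₁.edges) → (∀ e ∈ β.edges, e ∈ C₂.edges) →
      ∃ (w : V) (c : G.Walk w w), c.IsCycle ∧
        c.length = S.length + T.length + α.length + β.length ∧
        ∀ e ∈ c.edges, e ∈ C₁.edges ∨ e ∈ C₂.edges ∨ e ∈ S.edges ∨ e ∈ T.edges := by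
    intro α β hα hβ hαs hβs hαe hβe
    have hβT : (β.append T.reverse).IsPath := by
      apply isPath_append' hβ hT.reverse
      intro x hxβ hxT
      have hxT' : x ∈ T.support := by
        rwa [Walk.support_reverse, List.mem_reverse] at hxT
      exact hTsup2 x hxT' (hβs x hxβ)
    have hW : (S.append (β.append T.reverse)).IsPath := by
      apply isPath_append' hS hβT
      intro x hxS hx
      rw [Walk.mem_support_append_iff] at hx
      rcases hx with hxβ | hxT
      · exact hSsup2 x hxS (hβs x hxβ)
      · have hxT' : x ∈ T.support := by
          rwa [Walk.support_reverse, List.mem_reverse] at hxT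
        exact absurd hxT' (hST x hxS)
    set W := S.append (β.append T.reverse) with hWdef
    have hWsup : ∀ x ∈ W.support, x ∈ S.support ∨ x ∈ β.support ∨ x ∈ T.support := by
      intro x hx
      rw [hWdef, Walk.mem_support_append_iff, Walk.mem_support_append_iff,
        Walk.support_reverse, List.mem_reverse] at hx
      tauto
    have hWedges : ∀ e ∈ W.edges, e ∈ S.edges ∨ e ∈ β.edges ∨ e ∈ T.edges := by
      intro e he
      rw [hWdef, Walk.edges_append, Walk.edges_append, Walk.edges_reverse,
        List.mem_append, List.mem_append, List.mem_reverse] at he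
      tauto
    have hcyc : (α.append W.reverse).IsCycle := by
      apply cycle_of_two_paths hα hW hu₁w₁
      · intro x hxα hxW
        have hx1 : x ∈ C₁.support := hαs x hxα
        rcases hWsup x hxW with hxS | hxβ | hxT
        · exact Or.inl (hSsup1 x hxS hx1)
        · exact absurd (hβs x hxβ) (hdisj x hx1)
        · exact Or.inr (hTsup1 x hxT hx1)
      · intro e
        induction e using Sym2.ind with
        | _ x y =>
          intro heα heW
          have hx : x ∈ α.support := Walk.fst_mem_support_of_mem_edges α heα
          have hy : y ∈ α.support := Walk.snd_mem_support_of_mem_edges α heα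
          have hadj : G.Adj x y := Walk.adj_of_mem_edges α heα
          have hx1 : x ∈ C₁.support := hαs x hx
          have hy1 : y ∈ C₁.support := hαs y hy
          rcases hWedges _ heW with hS' | hβ' | hT'
          · have hxu := hSsup1 x (Walk.fst_mem_support_of_mem_edges S hS') hx1
            have hyu := hSsup1 y (Walk.snd_mem_support_of_mem_edges S hS') hy1
            exact hadj.ne (hxu.trans hyu.symm)
          · exact hdisj x hx1 (hβs x (Walk.fst_mem_support_of_mem_edges β hβ'))
          · have hxu := hTsup1 x (Walk.fst_mem_support_of_mem_edges T hT') hx1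
            have hyu := hTsup1 y (Walk.snd_mem_support_of_mem_edges T hT') hy1
            exact hadj.ne (hxu.trans hyu.symm)
    refine ⟨u₁, α.append W.reverse, hcyc, ?_, ?_⟩
    · rw [Walk.length_append, Walk.length_reverse, hWdef, Walk.length_append,
        Walk.length_append, Walk.length_reverse]
      omega
    · intro e he
      rw [Walk.edges_append, List.mem_append, Walk.edges_reverse, List.mem_reverse] at he
      rcases he with he | he
      · exact Or.inl (hαe e he)
      · rcases hWedges e he with h | h | h
        · tauto
        · exact Or.inr (Or.inl (hβe e h))
        · tauto
  refine ⟨α₁.length, α₂.length, β₁.length, β₂.length, hlen₁, hlen₂, ?_⟩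
  intro X Y hX hY
  rcases hX with rfl | rfl <;> rcases hY with rfl | rfl
  · exact key α₁ β₁ hα₁p hβ₁p hα₁s hβ₁s hα₁e hβ₁e
  · exact key α₁ β₂ hα₁p hβ₂p hα₁s hβ₂s hα₁e hβ₂e
  · exact key α₂ β₁ hα₂p hβ₁p hα₂s hβ₁s hα₂e hβ₁e
  · exact key α₂ β₂ hα₂p hβ₂p hα₂s hβ₂s hα₂e hβ₂e

end StmtThirteenAux

open StmtThirteenAux in
set_option maxHeartbeats 2000000 in
/-- Let `G` contain two vertex-disjoint odd cycles `C₁`, `C₂` whose lengths are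
congruent modulo 4, together with three pairwise vertex-disjoint paths `P`, `Q`, `R`,
each joining a vertex of `C₁` to a vertex of `C₂` with no interior vertex on
`C₁ ∪ C₂`.  Then the subgraph `C₁ ∪ C₂ ∪ P ∪ Q ∪ R` contains a cycle of length
divisible by 4. -/
theorem stmt_13 {V : Type*} (G : SimpleGraph V) (v₁ v₂ : V)
    (C₁ : G.Walk v₁ v₁) (C₂ : G.Walk v₂ v₂)
    (hC₁ : C₁.IsCycle) (hC₂ : C₂.IsCycle)
    (hodd₁ : Odd C₁.length) (hodd₂ : Odd C₂.length)
    (hmod : C₁.length % 4 = C₂.length % 4)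
    (hdisj : ∀ u, u ∈ C₁.support → u ∉ C₂.support)
    (a₁ a₂ b₁ b₂ c₁ c₂ : V)
    (P : G.Walk a₁ a₂) (Q : G.Walk b₁ b₂) (R : G.Walk c₁ c₂)
    (hP : P.IsPath) (hQ : Q.IsPath) (hR : R.IsPath)
    (ha₁ : a₁ ∈ C₁.support) (ha₂ : a₂ ∈ C₂.support)
    (hb₁ : b₁ ∈ C₁.support) (hb₂ : b₂ ∈ C₂.support)
    (hc₁ : c₁ ∈ C₁.support) (hc₂ : c₂ ∈ C₂.support)
    (hPint : ∀ u ∈ P.support, u ≠ a₁ → u ≠ a₂ →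
      u ∉ C₁.support ∧ u ∉ C₂.support)
    (hQint : ∀ u ∈ Q.support, u ≠ b₁ → u ≠ b₂ →
      u ∉ C₁.support ∧ u ∉ C₂.support)
    (hRint : ∀ u ∈ R.support, u ≠ c₁ → u ≠ c₂ →
      u ∉ C₁.support ∧ u ∉ C₂.support)
    (hPQ : ∀ u, u ∈ P.support → u ∉ Q.support)
    (hPR : ∀ u, u ∈ P.support → u ∉ R.support)
    (hQR : ∀ u, u ∈ Q.support → u ∉ R.support) :
    ∃ (w : V) (c : G.Walk w w), c.IsCycle ∧ 4 ∣ c.length ∧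
      ∀ e ∈ c.edges, e ∈ C₁.edges ∨ e ∈ C₂.edges ∨
        e ∈ P.edges ∨ e ∈ Q.edges ∨ e ∈ R.edges := by
  classical
  have hl : C₁.length % 2 = 1 := Nat.odd_iff.mp hodd₁
  have hsel : (P.length + Q.length + C₁.length) % 2 = 1 ∨
      (P.length + R.length + C₁.length) % 2 = 1 ∨
      (Q.length + R.length + C₁.length) % 2 = 1 := by omega
  rcases hsel with hsel | hsel | hsel
  · obtain ⟨A, A', B, B', hA, hB, key⟩ :=
      pair_cycles hC₁ hC₂ hdisj hP hQ ha₁ ha₂ hb₁ hb₂ hPint hQint hPQ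
    rcases arith4 C₁.length C₂.length (P.length + Q.length) A A' B B' hA hB hl hsel hmod
      with h4 | h4 | h4 | h4
    · obtain ⟨w, c, hcyc, hlen, hedges⟩ := key A B (Or.inl rfl) (Or.inl rfl)
      exact ⟨w, c, hcyc, hlen ▸ h4, fun e he => by rcases hedges e he with h|h|h|h <;> tauto⟩
    · obtain ⟨w, c, hcyc, hlen, hedges⟩ := key A B' (Or.inl rfl) (Or.inr rfl)
      exact ⟨w, c, hcyc, hlen ▸ h4, fun e he => by rcases hedges e he with h|h|h|h <;> tauto⟩
    · obtain ⟨w, c, hcyc, hlen, hedges⟩ := key A' B (Or.inr rfl) (Or.inl rfl)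
      exact ⟨w, c, hcyc, hlen ▸ h4, fun e he => by rcases hedges e he with h|h|h|h <;> tauto⟩
    · obtain ⟨w, c, hcyc, hlen, hedges⟩ := key A' B' (Or.inr rfl) (Or.inr rfl)
      exact ⟨w, c, hcyc, hlen ▸ h4, fun e he => by rcases hedges e he with h|h|h|h <;> tauto⟩
  · obtain ⟨A, A', B, B', hA, hB, key⟩ :=
      pair_cycles hC₁ hC₂ hdisj hP hR ha₁ ha₂ hc₁ hc₂ hPint hRint hPR
    rcases arith4 C₁.length C₂.length (P.length + R.length) A A' B B' hA hB hl hsel hmod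
      with h4 | h4 | h4 | h4
    · obtain ⟨w, c, hcyc, hlen, hedges⟩ := key A B (Or.inl rfl) (Or.inl rfl)
      exact ⟨w, c, hcyc, hlen ▸ h4, fun e he => by rcases hedges e he with h|h|h|h <;> tauto⟩
    · obtain ⟨w, c, hcyc, hlen, hedges⟩ := key A B' (Or.inl rfl) (Or.inr rfl)
      exact ⟨w, c, hcyc, hlen ▸ h4, fun e he => by rcases hedges e he with h|h|h|h <;> tauto⟩
    · obtain ⟨w, c, hcyc, hlen, hedges⟩ := key A' B (Or.inr rfl) (Or.inl rfl)
      exact ⟨w, c, hcyc, hlen ▸ h4, fun e he => by rcases hedges e he with h|h|h|h <;> tauto⟩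
    · obtain ⟨w, c, hcyc, hlen, hedges⟩ := key A' B' (Or.inr rfl) (Or.inr rfl)
      exact ⟨w, c, hcyc, hlen ▸ h4, fun e he => by rcases hedges e he with h|h|h|h <;> tauto⟩
  · obtain ⟨A, A', B, B', hA, hB, key⟩ :=
      pair_cycles hC₁ hC₂ hdisj hQ hR hb₁ hb₂ hc₁ hc₂ hQint hRint hQR
    rcases arith4 C₁.length C₂.length (Q.length + R.length) A A' B B' hA hB hl hsel hmod
      with h4 | h4 | h4 | h4
    · obtain ⟨w, c, hcyc, hlen, hedges⟩ := key A B (Or.inl rfl) (Or.inl rfl)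
      exact ⟨w, c, hcyc, hlen ▸ h4, fun e he => by rcases hedges e he with h|h|h|h <;> tauto⟩
    · obtain ⟨w, c, hcyc, hlen, hedges⟩ := key A B' (Or.inl rfl) (Or.inr rfl)
      exact ⟨w, c, hcyc, hlen ▸ h4, fun e he => by rcases hedges e he with h|h|h|h <;> tauto⟩
    · obtain ⟨w, c, hcyc, hlen, hedges⟩ := key A' B (Or.inr rfl) (Or.inl rfl)
      exact ⟨w, c, hcyc, hlen ▸ h4, fun e he => by rcases hedges e he with h|h|h|h <;> tauto⟩
    · obtain ⟨w, c, hcyc, hlen, hedges⟩ := key A' B' (Or.inr rfl) (Or.inr rfl)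
      exact ⟨w, c, hcyc, hlen ▸ h4, fun e he => by rcases hedges e he with h|h|h|h <;> tauto⟩
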